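/- Rational Monotonicity: if L_α = L_β, σ ⊬_k ¬α and σ ⊢_k β, then σ * α ⊢_k β. -/

import Mathlib

namespace BeliefSeq

/-- Propositional formulas over a type `ν` of propositional variables,
with connectives ¬, ∧, ∨, →, ↔ and constants true, false. -/
inductive PropForm (ν : Type) : Type where
  | var : ν → PropForm ν
  | tru : PropForm ν
  | fls : PropForm ν
  | neg : PropForm ν → PropForm ν
  | conj : PropForm ν → PropForm ν → PropForm ν
  | disj : PropForm ν → PropForm ν → PropForm ν
  | impl : PropForm ν → PropForm ν → PropForm ν
  | biim : PropForm ν → PropForm ν → PropForm ν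

namespace PropForm

variable {ν : Type}

/-- Classical (two-valued) evaluation of a formula under a valuation. -/
def eval (v : ν → Bool) : PropForm ν → Bool
  | var x => v x
  | tru => true
  | fls => false
  | neg φ => !(φ.eval v)
  | conj φ ψ => φ.eval v && ψ.eval v
  | disj φ ψ => φ.eval v || ψ.eval v
  | impl φ ψ => !(φ.eval v) || ψ.eval v
  | biim φ ψ => φ.eval v == ψ.eval v

/-- The set `L(α)` of variables occurring syntactically in a formula. -/
def vars : PropForm ν → Set ν
  | var x => {x}
  | tru => ∅
  | fls => ∅
  | neg φ => φ.vars
  | conj φ ψ => φ.vars ∪ ψ.vars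
  | disj φ ψ => φ.vars ∪ ψ.vars
  | impl φ ψ => φ.vars ∪ ψ.vars
  | biim φ ψ => φ.vars ∪ ψ.vars

end PropForm

variable {ν : Type}

/-- `α ⇔ β` : logical equivalence (α ↔ β is a tautology). -/
def Equiv (α β : PropForm ν) : Prop := ∀ v, α.eval v = β.eval v

def Tautology (α : PropForm ν) : Prop := ∀ v, α.eval v = true

def Contradiction (α : PropForm ν) : Prop := ∀ v, α.eval v = false

/-- Classical consequence `Γ ⊢ γ`. -/
def Entails (Γ : Set (PropForm ν)) (γ : PropForm ν) : Prop :=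
  ∀ v, (∀ φ ∈ Γ, φ.eval v = true) → γ.eval v = true

/-- Consistency (satisfiability) of a set of formulas. -/
def Satisfiable (Γ : Set (PropForm ν)) : Prop :=
  ∃ v, ∀ φ ∈ Γ, φ.eval v = true

/-- `V` expresses `α`: α is logically equivalent to some formula
all of whose variables lie in `V`. -/
def Expresses (V : Set ν) (α : PropForm ν) : Prop :=
  ∃ β : PropForm ν, Equiv α β ∧ β.vars ⊆ V

/-- `L_α` : the smallest language of `α` (intersection of all sets of
variables expressing `α`). -/
def Lang (α : PropForm ν) : Set ν := ⋂₀ {V : Set ν | Expresses V α}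

/-- Direct relevance (`0`-relevance): logical language overlap `L_α ∩ L_β ≠ ∅`. -/
def DirectRel (α β : PropForm ν) : Prop := (Lang α ∩ Lang β).Nonempty

/-- `k`-relevance of `α`, `β` w.r.t. the belief sequence `σ`:
there is a chain `χ_1, …, χ_k` of formulas of `σ` with
`α, χ₁` directly relevant, each `χ_i, χ_{i+1}` directly relevant,
and `χ_k, β` directly relevant (for `k = 0` this is direct relevance). -/
def KRel (k : ℕ) (α β : PropForm ν) (σ : List (PropForm ν)) : Prop :=
  ∃ l : List (PropForm ν), l.length = k ∧ (∀ χ ∈ l, χ ∈ σ) ∧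
    List.Chain' DirectRel (α :: (l ++ [β]))

/-- `rel(α,β,σ)` : the least `k` such that `α, β` are `k`-relevant w.r.t. `σ`
(`∞ = ⊤` if they are irrelevant). -/
noncomputable def relDeg (α β : PropForm ν) (σ : List (PropForm ν)) : ℕ∞ :=
  sInf {n : ℕ∞ | ∃ k : ℕ, n = (k : ℕ∞) ∧ KRel k α β σ}

open Classical in
/-- The priority ordering imposed by the query `γ` on the (indexed) entries of `σ`:
more relevant first; among equally relevant entries, more recent
(larger index) first. -/
noncomputable def priority (γ : PropForm ν) (σ : List (PropForm ν)) :
    (ℕ × PropForm ν) → (ℕ × PropForm ν) → Bool :=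
  fun a b =>
    decide (relDeg γ a.2 σ < relDeg γ b.2 σ ∨
      (relDeg γ a.2 σ = relDeg γ b.2 σ ∧ b.1 ≤ a.1))

/-- The entries `δ_1, …, δ_n` of `σ` reordered by the priority above. -/
noncomputable def prioritized (γ : PropForm ν) (σ : List (PropForm ν)) :
    List (PropForm ν) :=
  ((σ.zipIdx.map Prod.swap).mergeSort (priority γ σ)).map Prod.snd

open Classical in
/-- The prioritized maxiconsistent set `Γ_{⟨σ,k,γ⟩}` : go through `δ_1, …, δ_n`
in priority order, skipping `δ_{i+1}` if `Γ^i ⊢ ¬δ_{i+1}` or `δ_{i+1}` is not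
`k`-relevant to `γ` w.r.t. `σ`, and adding it otherwise. -/
noncomputable def Gamma (σ : List (PropForm ν)) (k : ℕ) (γ : PropForm ν) :
    Set (PropForm ν) :=
  (prioritized γ σ).foldl
    (fun Γ δ =>
      if Entails Γ (PropForm.neg δ) ∨ (k : ℕ∞) < relDeg γ δ σ then Γ
      else insert δ Γ) ∅

/-- `σ ⊢_k γ` iff `Γ_{⟨σ,k,γ⟩} ⊢ γ`. -/
def InferK (σ : List (PropForm ν)) (k : ℕ) (γ : PropForm ν) : Prop :=
  Entails (Gamma σ k γ) γ

/-- `C_k(σ) = {γ | σ ⊢_k γ}`. -/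
def Ck (σ : List (PropForm ν)) (k : ℕ) : Set (PropForm ν) :=
  {γ | InferK σ k γ}

/-- Revision `σ * γ` : concatenation of `γ` at the (most recent) end of `σ`. -/
def revise (σ : List (PropForm ν)) (γ : PropForm ν) : List (PropForm ν) :=
  σ ++ [γ]


lemma entails_mono {A B : Set (PropForm ν)} (h : A ⊆ B) {γ : PropForm ν}
    (hE : Entails A γ) : Entails B γ :=
  fun v hv => hE v (fun φ hφ => hv φ (h hφ))

lemma lang_neg (α : PropForm ν) : Lang (PropForm.neg α) = Lang α := by
  have hs : {V : Set ν | Expresses V (PropForm.neg α)} = {V | Expresses V α} := by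
    ext V
    simp only [Set.mem_setOf_eq, Expresses]
    constructor
    · rintro ⟨b, hb, hv⟩
      refine ⟨PropForm.neg b, fun v => ?_, hv⟩
      have := hb v
      simp only [PropForm.eval] at this ⊢
      rw [← this, Bool.not_not]
    · rintro ⟨b, hb, hv⟩
      refine ⟨PropForm.neg b, fun v => ?_, hv⟩
      have := hb v
      simp only [PropForm.eval] at this ⊢
      rw [this]
  unfold Lang
  rw [hs]

lemma directRel_congr_left {α α' : PropForm ν} (h : Lang α = Lang α')
    (β : PropForm ν) : DirectRel α β ↔ DirectRel α' β := by
  unfold DirectRel; rw [h]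

lemma chain'_head_congr {α α' : PropForm ν} (h : Lang α = Lang α')
    {t : List (PropForm ν)} (hc : List.Chain' DirectRel (α :: t)) :
    List.Chain' DirectRel (α' :: t) := by
  cases t with
  | nil => simp [List.Chain']
  | cons y t =>
    rw [List.Chain', List.isChain_cons_cons] at hc ⊢
    exact ⟨(directRel_congr_left h y).mp hc.1, hc.2⟩

lemma kRel_congr_left {α α' β : PropForm ν} (h : Lang α = Lang α')
    (k : ℕ) (σ : List (PropForm ν)) : KRel k α β σ ↔ KRel k α' β σ := by
  constructor <;> rintro ⟨l, hlen, hmem, hchain⟩ <;>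
    exact ⟨l, hlen, hmem, chain'_head_congr (by rw [h]) hchain⟩

lemma relDeg_congr_left {α α' : PropForm ν} (h : Lang α = Lang α')
    (β : PropForm ν) (σ : List (PropForm ν)) : relDeg α β σ = relDeg α' β σ := by
  unfold relDeg
  congr 1
  ext n
  simp only [Set.mem_setOf_eq]
  constructor <;> rintro ⟨k, rfl, hK⟩
  · exact ⟨k, rfl, (kRel_congr_left h k σ).mp hK⟩
  · exact ⟨k, rfl, (kRel_congr_left h k σ).mpr hK⟩

lemma gamma_congr {γ γ' : PropForm ν} (h : Lang γ = Lang γ')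
    (σ : List (PropForm ν)) (k : ℕ) : Gamma σ k γ = Gamma σ k γ' := by
  have hrel : ∀ δ, relDeg γ δ σ = relDeg γ' δ σ := fun δ => relDeg_congr_left h δ σ
  have hpri : priority γ σ = priority γ' σ := by
    funext a b; unfold priority; rw [hrel, hrel]
  unfold Gamma prioritized
  rw [hpri]
  congr 1
  funext Γ δ
  rw [hrel]

lemma kRel_remove {α β : PropForm ν} (hL : Lang α = Lang β)
    (σ : List (PropForm ν)) (δ : PropForm ν) :
    ∀ k, KRel k β δ (σ ++ [α]) → ∃ k' ≤ k, KRel k' β δ σ := by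
  intro k
  induction k using Nat.strong_induction_on with
  | _ k ih =>
    rintro ⟨l, hlen, hmem, hchain⟩
    by_cases hα : α ∈ l
    · obtain ⟨l1, l2, rfl⟩ := List.append_of_mem hα
      have hsuf : List.Chain' DirectRel (α :: (l2 ++ [δ])) := by
        refine hchain.suffix ⟨β :: l1, ?_⟩
        simp
      have hc2 : List.Chain' DirectRel (β :: (l2 ++ [δ])) :=
        chain'_head_congr hL hsuf
      have hK2 : KRel l2.length β δ (σ ++ [α]) :=
        ⟨l2, rfl, fun χ hχ => hmem χ (by simp [hχ]), hc2⟩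
      have hlt : l2.length < k := by
        subst hlen; simp; omega
      obtain ⟨k', hk', hK⟩ := ih l2.length hlt hK2
      exact ⟨k', le_trans hk' (le_of_lt hlt), hK⟩
    · refine ⟨k, le_refl _, l, hlen, ?_, hchain⟩
      intro χ hχ
      rcases List.mem_append.mp (hmem χ hχ) with h | h
      · exact h
      · simp only [List.mem_singleton] at h
        subst h; exact absurd hχ hα

lemma relDeg_append {α β : PropForm ν} (hL : Lang α = Lang β)
    (σ : List (PropForm ν)) (δ : PropForm ν) :
    relDeg β δ (σ ++ [α]) = relDeg β δ σ := by
  unfold relDeg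
  apply le_antisymm
  · apply sInf_le_sInf
    rintro n ⟨k, rfl, l, hlen, hmem, hchain⟩
    exact ⟨k, rfl, l, hlen, fun χ hχ => by simp [hmem χ hχ], hchain⟩
  · apply le_sInf
    rintro n ⟨k, rfl, hK⟩
    obtain ⟨k', hk', hK'⟩ := kRel_remove hL σ δ k hK
    exact le_trans (sInf_le ⟨k', rfl, hK'⟩) (by exact_mod_cast hk')

lemma no_chain_of_lang_empty {β : PropForm ν} (hβ : Lang β = ∅)
    (χ : PropForm ν) (σ : List (PropForm ν)) : relDeg β χ σ = ⊤ := by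
  unfold relDeg
  convert sInf_empty using 2
  · exact rfl
  rw [Set.eq_empty_iff_forall_notMem]
  rintro n ⟨k, rfl, l, hlen, hmem, hchain⟩
  have : ∃ y t, (l ++ [χ]) = y :: t := by
    cases l with
    | nil => exact ⟨χ, [], rfl⟩
    | cons y l' => exact ⟨y, l' ++ [χ], rfl⟩
  obtain ⟨y, t, he⟩ := this
  rw [he, List.Chain', List.isChain_cons_cons] at hchain
  have := hchain.1
  unfold DirectRel at this
  rw [hβ, Set.empty_inter] at this
  exact Set.not_nonempty_empty this

lemma relDeg_min {α β : PropForm ν} (hL : Lang α = Lang β)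
    (σ : List (PropForm ν)) (δ : PropForm ν) :
    relDeg β α σ ≤ relDeg β δ σ := by
  by_cases hne : (Lang α).Nonempty
  · have hdr : DirectRel β α := by
      unfold DirectRel
      rw [← hL, Set.inter_self]
      exact hne
    have h0 : KRel 0 β α σ :=
      ⟨[], rfl, by simp, by simpa [List.Chain', List.isChain_pair] using hdr⟩
    have : relDeg β α σ ≤ (0 : ℕ∞) := sInf_le ⟨0, by simp, h0⟩
    exact le_trans this zero_le
  · have hLa : Lang α = ∅ := Set.not_nonempty_iff_eq_empty.mp hne
    have hLb : Lang β = ∅ := by rw [← hL]; exact hLa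
    rw [no_chain_of_lang_empty hLb α σ, no_chain_of_lang_empty hLb δ σ]


lemma sorted_perm_eq {γ : Type} {le : γ → γ → Bool} :
    ∀ (l1 l2 : List γ), List.Perm l1 l2 →
      l1.Pairwise (fun a b => le a b = true) →
      l2.Pairwise (fun a b => le a b = true) →
      (∀ a ∈ l1, ∀ b ∈ l1, le a b = true → le b a = true → a = b) →
      l1.Nodup → l1 = l2 := by
  intro l1
  induction l1 with
  | nil =>
    intro l2 h _ _ _ _
    exact (h.symm.eq_nil).symm
  | cons a t ih =>
    intro l2 h s1 s2 anti nd
    have ha2 : a ∈ l2 := h.subset List.mem_cons_self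
    obtain ⟨u, v, rfl⟩ := List.append_of_mem ha2
    have hu : u = [] := by
      cases u with
      | nil => rfl
      | cons b u' =>
        exfalso
        have hnd2 : (b :: (u' ++ a :: v)).Nodup := by
          simpa using h.nodup nd
        have hba : b ≠ a := by
          intro e
          rcases List.nodup_cons.mp hnd2 with ⟨hb, _⟩
          exact hb (by simp [e])
        have hb1 : b ∈ a :: t := h.symm.subset (by simp)
        have hbt : b ∈ t := by
          rcases List.mem_cons.mp hb1 with e | e
          · exact absurd e hba
          · exact e
        have hab : le a b = true := (List.pairwise_cons.mp s1).1 b hbt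
        have hba' : le b a = true := by
          have s2' : (b :: (u' ++ a :: v)).Pairwise (fun a b => le a b = true) := by
            simpa using s2
          exact (List.pairwise_cons.mp s2').1 a (by simp)
        exact hba ((anti a (by simp) b (by simp [hbt]) hab hba').symm)
    subst hu
    simp only [List.nil_append] at h s2 ⊢
    have ht : List.Perm t v := h.cons_inv
    have : t = v := ih v ht (List.pairwise_cons.mp s1).2 (List.pairwise_cons.mp s2).2
      (fun x hx y hy => anti x (by simp [hx]) y (by simp [hy])) (List.nodup_cons.mp nd).2
    rw [this]

lemma priority_trans (γ : PropForm ν) (σ : List (PropForm ν)) :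
    ∀ a b c, priority γ σ a b = true → priority γ σ b c = true →
      priority γ σ a c = true := by
  intro a b c hab hbc
  unfold priority at *
  rw [decide_eq_true_iff] at *
  rcases hab with h | ⟨h, h2⟩ <;> rcases hbc with h' | ⟨h', h2'⟩
  · exact Or.inl (lt_trans h h')
  · exact Or.inl (h' ▸ h)
  · exact Or.inl (h ▸ h')
  · exact Or.inr ⟨h.trans h', le_trans h2' h2⟩

lemma priority_total (γ : PropForm ν) (σ : List (PropForm ν)) :
    ∀ a b, (priority γ σ a b || priority γ σ b a) = true := by
  intro a b
  unfold priority
  rw [Bool.or_eq_true, decide_eq_true_iff, decide_eq_true_iff]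
  rcases lt_trichotomy (relDeg γ a.2 σ) (relDeg γ b.2 σ) with h | h | h
  · exact Or.inl (Or.inl h)
  · rcases le_total b.1 a.1 with h2 | h2
    · exact Or.inl (Or.inr ⟨h, h2⟩)
    · exact Or.inr (Or.inr ⟨h.symm, h2⟩)
  · exact Or.inr (Or.inl h)

lemma priority_append {α β : PropForm ν} (hL : Lang α = Lang β)
    (σ : List (PropForm ν)) :
    priority β (σ ++ [α]) = priority β σ := by
  funext a b
  unfold priority
  rw [relDeg_append hL, relDeg_append hL]

lemma List.mem_enum_iff_getElem?' {σ : List (PropForm ν)} {x : ℕ × PropForm ν} :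
    x ∈ σ.zipIdx.map Prod.swap ↔ σ[x.1]? = some x.2 := by
  rw [List.mem_map]
  constructor
  · rintro ⟨y, hy, rfl⟩
    exact List.mem_zipIdx_iff_getElem?.mp hy
  · intro h
    exact ⟨x.swap, List.mem_zipIdx_iff_getElem?.mpr h, rfl⟩

lemma mem_enum_fst_inj {σ : List (PropForm ν)} {α : PropForm ν}
    {a b : ℕ × PropForm ν}
    (ha : a ∈ (σ.zipIdx.map Prod.swap) ++ [(σ.length, α)]) (hb : b ∈ (σ.zipIdx.map Prod.swap) ++ [(σ.length, α)])
    (he : a.1 = b.1) : a = b := by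
  rcases List.mem_append.mp ha with ha | ha <;>
    rcases List.mem_append.mp hb with hb | hb
  · have h1 := List.mem_enum_iff_getElem?'.mp ha
    have h2 := List.mem_enum_iff_getElem?'.mp hb
    rw [he, h2] at h1
    exact Prod.ext he (Option.some.inj h1).symm
  · exfalso
    have h1 := List.mem_enum_iff_getElem?'.mp ha
    obtain ⟨hlt, _⟩ := List.getElem?_eq_some_iff.mp h1
    simp only [List.mem_singleton] at hb
    rw [hb] at he
    simp at he
    omega
  · exfalso
    have h1 := List.mem_enum_iff_getElem?'.mp hb
    obtain ⟨hlt, _⟩ := List.getElem?_eq_some_iff.mp h1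
    simp only [List.mem_singleton] at ha
    rw [ha] at he
    simp at he
    omega
  · simp only [List.mem_singleton] at ha hb
    rw [ha, hb]

lemma prioritized_append {α β : PropForm ν} (hL : Lang α = Lang β)
    (σ : List (PropForm ν)) :
    prioritized β (σ ++ [α]) = α :: prioritized β σ := by
  unfold prioritized
  rw [priority_append hL]
  set le := priority β σ with hle
  have henum : ((σ ++ [α]).zipIdx.map Prod.swap) = (σ.zipIdx.map Prod.swap) ++ [(σ.length, α)] := by
    simp [List.zipIdx_append]
  rw [henum]
  have key : ((σ.zipIdx.map Prod.swap) ++ [(σ.length, α)]).mergeSort le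
      = (σ.length, α) :: (σ.zipIdx.map Prod.swap).mergeSort le := by
    have hnd : ((σ.zipIdx.map Prod.swap) ++ [(σ.length, α)]).Nodup := by
      rw [← henum]
      exact List.Nodup.of_map Prod.fst
        (by rw [List.map_map, show (Prod.fst ∘ Prod.swap : PropForm ν × ℕ → ℕ) = Prod.snd from rfl, List.zipIdx_map_snd]; exact List.nodup_range')
    have anti : ∀ a ∈ (σ.zipIdx.map Prod.swap) ++ [(σ.length, α)], ∀ b ∈ (σ.zipIdx.map Prod.swap) ++ [(σ.length, α)],
        le a b = true → le b a = true → a = b := by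
      intro a ha b hb h1 h2
      rw [hle] at h1 h2
      unfold priority at h1 h2
      rw [decide_eq_true_iff] at h1 h2
      have : a.1 = b.1 := by
        rcases h1 with h1 | ⟨h1, h1'⟩ <;> rcases h2 with h2 | ⟨h2, h2'⟩
        · exact absurd h2 (lt_asymm h1)
        · exact absurd h2 (ne_of_gt h1)
        · exact absurd h1 (ne_of_gt h2)
        · omega
      exact mem_enum_fst_inj ha hb this
    have hperm : List.Perm (((σ.zipIdx.map Prod.swap) ++ [(σ.length, α)]).mergeSort le)
        ((σ.length, α) :: (σ.zipIdx.map Prod.swap).mergeSort le) := by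
      refine (List.mergeSort_perm _ le).trans ?_
      refine (List.perm_append_singleton _ _).trans ?_
      exact (List.mergeSort_perm (σ.zipIdx.map Prod.swap) le).symm.cons _
    have hs1 := List.pairwise_mergeSort (priority_trans β σ) (priority_total β σ)
      ((σ.zipIdx.map Prod.swap) ++ [(σ.length, α)])
    have hle_head : ∀ b ∈ (σ.zipIdx.map Prod.swap).mergeSort le, le (σ.length, α) b = true := by
      intro b hb
      have hb' : b ∈ (σ.zipIdx.map Prod.swap) := (List.mergeSort_perm (σ.zipIdx.map Prod.swap) le).subset hb
      have hlt : b.1 < σ.length := by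
        have h1 := List.mem_enum_iff_getElem?'.mp hb'
        obtain ⟨hlt, _⟩ := List.getElem?_eq_some_iff.mp h1
        exact hlt
      rw [hle]
      unfold priority
      rw [decide_eq_true_iff]
      rcases lt_or_eq_of_le (relDeg_min hL σ b.2) with h | h
      · exact Or.inl h
      · exact Or.inr ⟨h, le_of_lt hlt⟩
    have hs2 : ((σ.length, α) :: (σ.zipIdx.map Prod.swap).mergeSort le).Pairwise
        (fun a b => le a b = true) := by
      rw [List.pairwise_cons]
      exact ⟨hle_head, List.pairwise_mergeSort (priority_trans β σ) (priority_total β σ) (σ.zipIdx.map Prod.swap)⟩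
    exact sorted_perm_eq _ _ hperm hs1 hs2
      (fun a ha b hb => anti a ((List.mergeSort_perm _ le).subset ha)
        b ((List.mergeSort_perm _ le).subset hb))
      ((List.mergeSort_perm ((σ.zipIdx.map Prod.swap) ++ [(σ.length, α)]) le).symm.nodup hnd)
  rw [key]
  simp


lemma subset_foldl {F : Type} (f : Set F → F → Set F)
    (hf : ∀ A δ, A ⊆ f A δ) : ∀ (l : List F) (A : Set F), A ⊆ l.foldl f A := by
  intro l
  induction l with
  | nil => intro A; simp
  | cons δ t ih => intro A; exact (hf A δ).trans (ih (f A δ))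

open Classical in
lemma foldl_insert_gamma (k : ℕ) (β α : PropForm ν) (σ : List (PropForm ν)) :
    ∀ (l : List (PropForm ν)) (A : Set (PropForm ν)),
      (∃ v, α.eval v = true ∧ ∀ φ ∈ l.foldl (fun Γ δ =>
          if Entails Γ (PropForm.neg δ) ∨ (k : ℕ∞) < relDeg β δ σ then Γ
          else insert δ Γ) A, φ.eval v = true) →
      l.foldl (fun Γ δ =>
          if Entails Γ (PropForm.neg δ) ∨ (k : ℕ∞) < relDeg β δ σ then Γ
          else insert δ Γ) (insert α A)
        = insert α (l.foldl (fun Γ δ =>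
          if Entails Γ (PropForm.neg δ) ∨ (k : ℕ∞) < relDeg β δ σ then Γ
          else insert δ Γ) A) := by
  intro l
  induction l with
  | nil => intro A _; simp
  | cons δ t ih =>
    intro A hv
    simp only [List.foldl_cons] at hv ⊢
    by_cases h1 : Entails A (PropForm.neg δ) ∨ (k : ℕ∞) < relDeg β δ σ
    · rw [if_pos h1] at hv
      have h1' : Entails (insert α A) (PropForm.neg δ) ∨ (k : ℕ∞) < relDeg β δ σ := by
        rcases h1 with h1 | h1
        · exact Or.inl (entails_mono (Set.subset_insert _ _) h1)
        · exact Or.inr h1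
      rw [if_pos h1, if_pos h1']
      exact ih A hv
    · rw [if_neg h1] at hv
      obtain ⟨v, hvα, hvall⟩ := hv
      have hsub : insert δ A ⊆ t.foldl (fun Γ δ =>
          if Entails Γ (PropForm.neg δ) ∨ (k : ℕ∞) < relDeg β δ σ then Γ
          else insert δ Γ) (insert δ A) := by
        refine subset_foldl _ (fun A' δ' => ?_) t (insert δ A)
        split
        · exact subset_refl _
        · exact Set.subset_insert _ _
      have hδv : δ.eval v = true := hvall δ (hsub (Set.mem_insert _ _))
      have h1' : ¬(Entails (insert α A) (PropForm.neg δ) ∨ (k : ℕ∞) < relDeg β δ σ) := by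
        rintro (hE | hlt)
        · have hvins : ∀ φ ∈ insert α A, φ.eval v = true := by
            intro φ hφ
            rcases hφ with hφ | hφ
            · subst hφ; exact hvα
            · exact hvall φ (hsub (Set.subset_insert δ A hφ))
          have := hE v hvins
          simp only [PropForm.eval, hδv] at this
          exact absurd this (by simp)
        · exact h1 (Or.inr hlt)
      rw [if_neg h1, if_neg h1']
      rw [Set.insert_comm]
      exact ih (insert δ A) ⟨v, hvα, hvall⟩

/-- Rational Monotonicity: if `L_α = L_β`, `σ ⊬_k ¬α`
and `σ ⊢_k β`, then `σ * α ⊢_k β`. -/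
theorem rational_monotonicity {ν : Type} (α β : PropForm ν)
    (hL : Lang α = Lang β) (σ : List (PropForm ν)) (k : ℕ)
    (hα : ¬ InferK σ k (PropForm.neg α)) (hβ : InferK σ k β) :
    InferK (revise σ α) k β := by
  classical
  have hGneg : Gamma σ k (PropForm.neg α) = Gamma σ k β :=
    gamma_congr (by rw [lang_neg, hL]) σ k
  unfold InferK at hα hβ ⊢
  rw [hGneg] at hα
  unfold revise
  unfold Gamma at hα hβ ⊢
  rw [prioritized_append hL σ]
  have hfun : (fun (Γ : Set (PropForm ν)) δ =>
        if Entails Γ (PropForm.neg δ) ∨ (k:ℕ∞) < relDeg β δ (σ ++ [α]) then Γ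
        else insert δ Γ)
      = (fun (Γ : Set (PropForm ν)) δ =>
        if Entails Γ (PropForm.neg δ) ∨ (k:ℕ∞) < relDeg β δ σ then Γ
        else insert δ Γ) := by
    funext Γ δ; rw [relDeg_append hL]
  rw [hfun, List.foldl_cons]
  by_cases h0 : Entails (∅ : Set (PropForm ν)) (PropForm.neg α) ∨ (k:ℕ∞) < relDeg β α σ
  · rcases h0 with h0 | h0
    · exact absurd (entails_mono (Set.empty_subset _) h0) hα
    · rw [if_pos (Or.inr h0)]
      exact hβ
  · rw [if_neg h0]
    have hv : ∃ v, α.eval v = true ∧ ∀ φ ∈ (prioritized β σ).foldl (fun Γ δ =>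
        if Entails Γ (PropForm.neg δ) ∨ (k : ℕ∞) < relDeg β δ σ then Γ
        else insert δ Γ) ∅, φ.eval v = true := by
      unfold Entails at hα
      push_neg at hα
      obtain ⟨v, hvΓ, hne⟩ := hα
      refine ⟨v, ?_, hvΓ⟩
      simpa [PropForm.eval] using hne
    rw [foldl_insert_gamma k β α σ (prioritized β σ) ∅ hv]
    exact entails_mono (Set.subset_insert _ _) hβ

end BeliefSeq
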